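/- If T₁, T₂ are commuting contractions with equal asymptotic limits A_{T₁} = A_{T₂}, then A_{T₁T₂} = A_{T₁} = A_{T₂}. -/

import Mathlib

open Filter Topology ContinuousLinearMap

private lemma aux_norm_pow_le' {H : Type*} [NormedAddCommGroup H] [InnerProductSpace ℂ H]
    (T : H →L[ℂ] H) (hT : ‖T‖ ≤ 1) (n : ℕ) (y : H) : ‖(T ^ n) y‖ ≤ ‖y‖ := by
  induction n with
  | zero => simp
  | succ n ih =>
    rw [pow_succ', ContinuousLinearMap.mul_apply]
    calc ‖T ((T ^ n) y)‖ ≤ ‖T‖ * ‖(T ^ n) y‖ := T.le_opNorm _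
      _ ≤ 1 * ‖(T ^ n) y‖ := by gcongr
      _ = ‖(T ^ n) y‖ := one_mul _
      _ ≤ ‖y‖ := ih

/-- For a contraction `T` with asymptotic limit `A`, `‖T^n x‖² → re ⟪A x, x⟫`. -/
private lemma aux_tendsto_norm_sq {H : Type*} [NormedAddCommGroup H] [InnerProductSpace ℂ H]
    [CompleteSpace H] (T A : H →L[ℂ] H)
    (hA : ∀ x, Tendsto (fun n : ℕ => (ContinuousLinearMap.adjoint (T ^ n)) ((T ^ n) x))
      atTop (𝓝 (A x))) (x : H) :
    Tendsto (fun n : ℕ => (‖(T ^ n) x‖ : ℝ) ^ 2) atTop (𝓝 ((inner ℂ (A x) x : ℂ).re)) := by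
  have h1 : Tendsto (fun n : ℕ =>
      (inner ℂ ((ContinuousLinearMap.adjoint (T ^ n)) ((T ^ n) x)) x : ℂ)) atTop
      (𝓝 (inner ℂ (A x) x : ℂ)) := (hA x).inner tendsto_const_nhds
  have h2 : (fun n : ℕ => (inner ℂ ((ContinuousLinearMap.adjoint (T ^ n)) ((T ^ n) x)) x : ℂ))
      = fun n : ℕ => ((‖(T ^ n) x‖ ^ 2 : ℝ) : ℂ) := by
    funext n
    rw [ContinuousLinearMap.adjoint_inner_left, inner_self_eq_norm_sq_to_K]
    norm_cast
  rw [h2] at h1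
  have h3 := (Complex.continuous_re.tendsto _).comp h1
  have h4 : (Complex.re ∘ fun n : ℕ => ((‖(T ^ n) x‖ ^ 2 : ℝ) : ℂ))
      = fun n : ℕ => (‖(T ^ n) x‖ : ℝ) ^ 2 := by
    funext n; norm_cast
  rwa [h4] at h3

/-- The inner product value is real. -/
private lemma aux_inner_real {H : Type*} [NormedAddCommGroup H] [InnerProductSpace ℂ H]
    [CompleteSpace H] (T A : H →L[ℂ] H)
    (hA : ∀ x, Tendsto (fun n : ℕ => (ContinuousLinearMap.adjoint (T ^ n)) ((T ^ n) x))
      atTop (𝓝 (A x))) (x : H) :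
    (inner ℂ (A x) x : ℂ) = ((inner ℂ (A x) x : ℂ).re : ℂ) := by
  have h1 : Tendsto (fun n : ℕ =>
      (inner ℂ ((ContinuousLinearMap.adjoint (T ^ n)) ((T ^ n) x)) x : ℂ)) atTop
      (𝓝 (inner ℂ (A x) x : ℂ)) := (hA x).inner tendsto_const_nhds
  have h2 : (fun n : ℕ => (inner ℂ ((ContinuousLinearMap.adjoint (T ^ n)) ((T ^ n) x)) x : ℂ))
      = fun n : ℕ => ((‖(T ^ n) x‖ ^ 2 : ℝ) : ℂ) := by
    funext n
    rw [ContinuousLinearMap.adjoint_inner_left, inner_self_eq_norm_sq_to_K]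
    norm_cast
  rw [h2] at h1
  have h4 := aux_tendsto_norm_sq T A hA x
  have h5 : Tendsto (fun n : ℕ => ((‖(T ^ n) x‖ ^ 2 : ℝ) : ℂ)) atTop
      (𝓝 (((inner ℂ (A x) x : ℂ).re : ℂ))) := by
    exact (Complex.continuous_ofReal.tendsto _).comp h4
  exact tendsto_nhds_unique h1 h5

/-- If `T₁`, `T₂` are commuting contractions with equal asymptotic limits
`A₁ = A₂`, then the asymptotic limit of `T₁T₂` equals them: `A₁₂ = A₁ = A₂`. -/
theorem stmt8 {H : Type*} [NormedAddCommGroup H] [InnerProductSpace ℂ H] [CompleteSpace H]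
    (T₁ T₂ : H →L[ℂ] H) (hT₁ : ‖T₁‖ ≤ 1) (hT₂ : ‖T₂‖ ≤ 1) (hcomm : T₁ * T₂ = T₂ * T₁)
    (A₁ A₂ A₁₂ : H →L[ℂ] H)
    (hA₁ : ∀ x, Tendsto (fun n : ℕ => (ContinuousLinearMap.adjoint (T₁ ^ n)) ((T₁ ^ n) x))
      atTop (𝓝 (A₁ x)))
    (hA₂ : ∀ x, Tendsto (fun n : ℕ => (ContinuousLinearMap.adjoint (T₂ ^ n)) ((T₂ ^ n) x))
      atTop (𝓝 (A₂ x)))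
    (hA₁₂ : ∀ x, Tendsto
      (fun n : ℕ => (ContinuousLinearMap.adjoint ((T₁ * T₂) ^ n)) (((T₁ * T₂) ^ n) x))
      atTop (𝓝 (A₁₂ x)))
    (heq : A₁ = A₂) :
    A₁₂ = A₁ ∧ A₁₂ = A₂ := by
  have hcomm' : Commute T₁ T₂ := hcomm
  -- main claim: A₁₂ = A₂
  have key : A₁₂ = A₂ := by
    have hinner : ∀ x : H, (inner ℂ (A₁₂ x) x : ℂ) = (inner ℂ (A₂ x) x : ℂ) := by
      intro x
      set r : ℝ := (inner ℂ (A₂ x) x : ℂ).re with hr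
      have hf : Tendsto (fun n : ℕ => ‖(T₂ ^ n) x‖ ^ 2) atTop (𝓝 r) :=
        aux_tendsto_norm_sq T₂ A₂ hA₂ x
      -- rewrite the product powers
      have hmp : ∀ n : ℕ, ((T₁ * T₂) ^ n) x = (T₁ ^ n) ((T₂ ^ n) x) := by
        intro n
        rw [hcomm'.mul_pow, ContinuousLinearMap.mul_apply]
      -- upper bound
      have hub : ∀ n : ℕ, ‖((T₁ * T₂) ^ n) x‖ ^ 2 ≤ ‖(T₂ ^ n) x‖ ^ 2 := by
        intro n
        rw [hmp n]
        have := aux_norm_pow_le' T₁ hT₁ n ((T₂ ^ n) x)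
        nlinarith [norm_nonneg ((T₁ ^ n) ((T₂ ^ n) x))]
      -- lower bound : r ≤ ‖(T₁T₂)^n x‖²
      have hlb : ∀ n : ℕ, r ≤ ‖((T₁ * T₂) ^ n) x‖ ^ 2 := by
        intro n
        set y : H := (T₂ ^ n) x with hy
        have ht : Tendsto (fun m : ℕ => ‖(T₁ ^ m) y‖ ^ 2) atTop
            (𝓝 ((inner ℂ (A₁ y) y : ℂ).re)) := aux_tendsto_norm_sq T₁ A₁ hA₁ y
        -- the limit along T₁ at y equals r (shift argument)
        have hshift : Tendsto (fun m : ℕ => ‖(T₂ ^ m) y‖ ^ 2) atTop (𝓝 r) := by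
          have h1 : Tendsto (fun m : ℕ => ‖(T₂ ^ (m + n)) x‖ ^ 2) atTop (𝓝 r) :=
            hf.comp (tendsto_add_atTop_nat n)
          have h2 : (fun m : ℕ => ‖(T₂ ^ (m + n)) x‖ ^ 2)
              = fun m : ℕ => ‖(T₂ ^ m) y‖ ^ 2 := by
            funext m
            rw [pow_add, ContinuousLinearMap.mul_apply]
          rwa [h2] at h1
        have hAy : (inner ℂ (A₁ y) y : ℂ).re = r := by
          have h3 : Tendsto (fun m : ℕ => ‖(T₂ ^ m) y‖ ^ 2) atTop
              (𝓝 ((inner ℂ (A₂ y) y : ℂ).re)) := aux_tendsto_norm_sq T₂ A₂ hA₂ y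
          rw [heq]
          exact tendsto_nhds_unique h3 hshift
        -- antitone sequence, so limit ≤ value at n
        have hanti : Antitone (fun m : ℕ => ‖(T₁ ^ m) y‖ ^ 2) := by
          apply antitone_nat_of_succ_le
          intro m
          have h4 : ‖(T₁ ^ (m + 1)) y‖ ≤ ‖(T₁ ^ m) y‖ := by
            rw [pow_succ', ContinuousLinearMap.mul_apply]
            calc ‖T₁ ((T₁ ^ m) y)‖ ≤ ‖T₁‖ * ‖(T₁ ^ m) y‖ := T₁.le_opNorm _
              _ ≤ 1 * ‖(T₁ ^ m) y‖ := by gcongr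
              _ = ‖(T₁ ^ m) y‖ := one_mul _
          nlinarith [norm_nonneg ((T₁ ^ (m + 1)) y), norm_nonneg ((T₁ ^ m) y)]
        have h5 : (inner ℂ (A₁ y) y : ℂ).re ≤ ‖(T₁ ^ n) y‖ ^ 2 :=
          le_of_tendsto ht (eventually_atTop.2 ⟨n, fun m hm => hanti hm⟩)
        rw [hmp n]
        rw [hAy] at h5
        exact h5
      -- squeeze
      have hg : Tendsto (fun n : ℕ => ‖((T₁ * T₂) ^ n) x‖ ^ 2) atTop (𝓝 r) :=
        tendsto_of_tendsto_of_tendsto_of_le_of_le tendsto_const_nhds hf hlb hub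
      have hg' : Tendsto (fun n : ℕ => ‖((T₁ * T₂) ^ n) x‖ ^ 2) atTop
          (𝓝 ((inner ℂ (A₁₂ x) x : ℂ).re)) := aux_tendsto_norm_sq (T₁ * T₂) A₁₂ hA₁₂ x
      have hre : (inner ℂ (A₁₂ x) x : ℂ).re = r := tendsto_nhds_unique hg' hg
      rw [aux_inner_real (T₁ * T₂) A₁₂ hA₁₂ x, aux_inner_real T₂ A₂ hA₂ x, hre]
    -- conclude equality of operators via polarization
    have hlin : (A₁₂ : H →ₗ[ℂ] H) = (A₂ : H →ₗ[ℂ] H) :=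
      (ext_inner_map (A₁₂ : H →ₗ[ℂ] H) (A₂ : H →ₗ[ℂ] H)).mp hinner
    ext x
    exact congrFun (congrArg DFunLike.coe hlin) x
  exact ⟨key.trans heq.symm, key⟩
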